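/- arXiv:2211.07767 — 2 statements merged into one kernel-verified Lean document; each statement's English description precedes it below -/
import Mathlib

section
/- Let a ≤ b be real numbers and let X be a real random variable with values in [a, b] almost surely. Define recursively F₁(X; η) = P(X ≤ η) and, for k ≥ 2, F_k(X; η) = ∫_{-∞}^{η} F_{k−1}(X; α) dα. Then for every integer k ≥ 2 and every η ∈ ℝ, F_k(X; η) = (1/(k−1)!) · E[((η − X)₊)^{k−1}], where (t)₊ denotes max(t, 0). -/
open MeasureTheory Set
open scoped ENNReal


lemma aux_int (x η : ℝ) (n : ℕ) :
    IntegrableOn (fun α => max (α - x) 0 ^ (n + 1)) (Iic η) := by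
  have hc : Continuous fun α : ℝ => max (α - x) 0 ^ (n + 1) :=
    ((continuous_id.sub continuous_const).max continuous_const).pow _
  have h0 : IntegrableOn
      ((Icc x η).indicator fun α : ℝ => max (α - x) 0 ^ (n + 1)) (Iic η) :=
    ((hc.integrableOn_Icc).integrable_indicator measurableSet_Icc).integrableOn
  refine h0.congr_fun (fun α hα => ?_) measurableSet_Iic
  by_cases h : x ≤ α
  · rw [indicator_of_mem (show α ∈ Icc x η from ⟨h, hα⟩)]
  · rw [indicator_of_notMem (fun hm => h hm.1)]
    simp [max_eq_right (by linarith : α - x ≤ 0)]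

lemma aux_calc (x η : ℝ) (n : ℕ) :
    ∫ α in Iic η, max (α - x) 0 ^ (n + 1) =
      max (η - x) 0 ^ (n + 2) / (n + 2) := by
  by_cases h : x ≤ η
  · have hsplit : Iic x ∪ Ioc x η = Iic η := Iic_union_Ioc_eq_Iic h
    rw [← hsplit, setIntegral_union (Iic_disjoint_Ioc le_rfl) measurableSet_Ioc
      ((aux_int x η n).mono_set (by rw [← hsplit]; exact subset_union_left))
      ((aux_int x η n).mono_set (by rw [← hsplit]; exact subset_union_right))]
    have h1 : ∫ α in Iic x, max (α - x) 0 ^ (n + 1) = 0 := by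
      rw [setIntegral_congr_fun (g := fun _ => (0:ℝ)) measurableSet_Iic
        (fun α (hα : α ≤ x) => by
          simp [max_eq_right (by linarith : α - x ≤ 0)])]
      simp
    have h2 : ∫ α in Ioc x η, max (α - x) 0 ^ (n + 1)
        = (η - x) ^ (n + 2) / (n + 2) := by
      rw [setIntegral_congr_fun (g := fun α => (α - x) ^ (n + 1)) measurableSet_Ioc
        (fun α (hα : α ∈ Ioc x η) => by
          simp only
          rw [max_eq_left (by linarith [hα.1] : (0:ℝ) ≤ α - x)])]
      rw [← intervalIntegral.integral_of_le h,
        intervalIntegral.integral_comp_sub_right (fun t => t ^ (n + 1)) x,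
        integral_pow]
      rw [sub_self]
      push_cast
      ring
    rw [h1, h2, max_eq_left (by linarith : (0:ℝ) ≤ η - x), zero_add]
  · push_neg at h
    rw [setIntegral_congr_fun (g := fun _ => (0:ℝ)) measurableSet_Iic
      (fun α (hα : α ≤ η) => by
        simp [max_eq_right (by linarith : α - x ≤ 0)])]
    simp [max_eq_right (by linarith : η - x ≤ 0)]

lemma aux_ofreal (t : ℝ) : ENNReal.ofReal (max t 0) = ENNReal.ofReal t := by
  rcases le_total t 0 with h | h
  · rw [max_eq_right h, ENNReal.ofReal_zero, eq_comm, ENNReal.ofReal_eq_zero]; exact h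
  · rw [max_eq_left h]

lemma aux_lint (x η : ℝ) (n : ℕ) :
    ∫⁻ α in Iic η, ENNReal.ofReal (max (α - x) 0 ^ (n + 1)) =
      ENNReal.ofReal (max (η - x) 0 ^ (n + 2) / (n + 2)) := by
  rw [← ofReal_integral_eq_lintegral_ofReal (aux_int x η n)
      (Filter.Eventually.of_forall fun α => pow_nonneg (le_max_right _ _) _),
    aux_calc]

/-- For the recursively defined `k`-th order distribution functions
`F₁(X; η) = P(X ≤ η)`, `F_k(X; η) = ∫_{-∞}^η F_{k-1}(X; α) dα`, one has
`F_k(X; η) = (1/(k-1)!) E[((η - X)₊)^(k-1)]` for all `k ≥ 2`. -/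
theorem stmt2 {Ω : Type*} [MeasurableSpace Ω] (P : Measure Ω) [IsProbabilityMeasure P]
    (a b : ℝ) (hab : a ≤ b) (X : Ω → ℝ) (hX : Measurable X)
    (hbd : ∀ᵐ ω ∂P, X ω ∈ Set.Icc a b)
    (F : ℕ → ℝ → ℝ)
    (hF1 : ∀ η : ℝ, F 1 η = (P {ω | X ω ≤ η}).toReal)
    (hFrec : ∀ j : ℕ, 1 ≤ j → ∀ η : ℝ, F (j + 1) η = ∫ α in Set.Iic η, F j α)
    (k : ℕ) (hk : 2 ≤ k) (η : ℝ) :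
    F k η = (1 / (Nat.factorial (k - 1) : ℝ)) * ∫ ω, (max (η - X ω) 0) ^ (k - 1) ∂P := by
  -- measurability of the two-variable kernels
  have hS : ∀ n : ℕ, Measurable (Function.uncurry fun (α : ℝ) (ω : Ω) =>
      ENNReal.ofReal (max (α - X ω) 0 ^ (n + 1))) := fun n =>
    (((measurable_fst.sub (hX.comp measurable_snd)).max measurable_const).pow_const
      (n + 1)).ennreal_ofReal
  have hmω : ∀ (c : ℝ) (n : ℕ), Measurable fun ω => max (c - X ω) 0 ^ (n + 1) :=
    fun c n => ((measurable_const.sub hX).max measurable_const).pow_const (n + 1)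
  -- real integral over Ω as a lintegral
  have hconv : ∀ (c : ℝ) (n : ℕ), ∫ ω, max (c - X ω) 0 ^ (n + 1) ∂P
      = (∫⁻ ω, ENNReal.ofReal (max (c - X ω) 0 ^ (n + 1)) ∂P).toReal := fun c n =>
    integral_eq_lintegral_of_nonneg_ae
      (Filter.Eventually.of_forall fun ω => pow_nonneg (le_max_right _ _) _)
      (hmω c n).aestronglyMeasurable
  -- finiteness of the inner lintegral
  have hfin : ∀ (c : ℝ) (n : ℕ),
      (∫⁻ ω, ENNReal.ofReal (max (c - X ω) 0 ^ (n + 1)) ∂P) < ⊤ := by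
    intro c n
    have hb : ∀ᵐ ω ∂P, ENNReal.ofReal (max (c - X ω) 0 ^ (n + 1))
        ≤ ENNReal.ofReal (max (c - a) 0 ^ (n + 1)) := by
      filter_upwards [hbd] with ω hω
      exact ENNReal.ofReal_le_ofReal (pow_le_pow_left₀ (le_max_right _ _)
        (max_le_max (by linarith [hω.1]) le_rfl) _)
    calc (∫⁻ ω, ENNReal.ofReal (max (c - X ω) 0 ^ (n + 1)) ∂P)
        ≤ ∫⁻ _, ENNReal.ofReal (max (c - a) 0 ^ (n + 1)) ∂P := lintegral_mono_ae hb
      _ = ENNReal.ofReal (max (c - a) 0 ^ (n + 1)) := by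
          rw [lintegral_const, measure_univ, mul_one]
      _ < ⊤ := ENNReal.ofReal_lt_top
  -- main claim by induction
  have key : ∀ n : ℕ, ∀ η : ℝ, F (n + 2) η =
      (1 / (Nat.factorial (n + 1) : ℝ)) * ∫ ω, max (η - X ω) 0 ^ (n + 1) ∂P := by
    intro n
    induction n with
    | zero =>
      intro η
      have hmind : Measurable (Function.uncurry fun (α : ℝ) (ω : Ω) =>
          (Ici (X ω)).indicator (1 : ℝ → ℝ≥0∞) α) := by
        have : (Function.uncurry fun (α : ℝ) (ω : Ω) =>
            (Ici (X ω)).indicator (1 : ℝ → ℝ≥0∞) α)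
            = ({p : ℝ × Ω | X p.2 ≤ p.1}).indicator (1 : ℝ × Ω → ℝ≥0∞) := by
          ext p
          by_cases h : X p.2 ≤ p.1 <;>
            simp [Function.uncurry, indicator, h, mem_Ici]
        rw [this]
        exact measurable_const.indicator
          (measurableSet_le (hX.comp measurable_snd) measurable_fst)
      have hPkey : ∀ α : ℝ, P {ω | X ω ≤ α}
          = ∫⁻ ω, (Ici (X ω)).indicator (1 : ℝ → ℝ≥0∞) α ∂P := by
        intro α
        have h : (fun ω => (Ici (X ω)).indicator (1 : ℝ → ℝ≥0∞) α)
            = ({ω | X ω ≤ α}).indicator (1 : Ω → ℝ≥0∞) := by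
          ext ω
          by_cases h : X ω ≤ α <;> simp [indicator, h, mem_Ici]
        rw [h]
        exact (lintegral_indicator_one (hX measurableSet_Iic)).symm
      have h2 : F 2 η = ∫ α in Iic η, (P {ω | X ω ≤ α}).toReal := by
        rw [hFrec 1 le_rfl η]
        exact setIntegral_congr_fun measurableSet_Iic fun α _ => hF1 α
      rw [h2]
      have h3 : ∫ α in Iic η, (P {ω | X ω ≤ α}).toReal
          = (∫⁻ α in Iic η, P {ω | X ω ≤ α}).toReal := by
        refine integral_toReal ?_ (Filter.Eventually.of_forall fun α => measure_lt_top _ _)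
        have h : (fun α : ℝ => P {ω | X ω ≤ α}) = fun α =>
            ∫⁻ ω, (Ici (X ω)).indicator (1 : ℝ → ℝ≥0∞) α ∂P := funext hPkey
        rw [h]
        exact (hmind.lintegral_prod_right).aemeasurable.restrict
      rw [h3]
      have h4 : ∫⁻ α in Iic η, P {ω | X ω ≤ α}
          = ∫⁻ ω, ENNReal.ofReal (η - X ω) ∂P := by
        rw [lintegral_congr hPkey, lintegral_lintegral_swap hmind.aemeasurable]
        refine lintegral_congr fun ω => ?_
        rw [lintegral_indicator_one measurableSet_Ici,
          Measure.restrict_apply measurableSet_Ici, Ici_inter_Iic, Real.volume_Icc]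
      rw [h4]
      have h5 : ∫ ω, max (η - X ω) 0 ^ (0 + 1) ∂P
          = (∫⁻ ω, ENNReal.ofReal (η - X ω) ∂P).toReal := by
        rw [hconv η 0]
        congr 1
        exact lintegral_congr fun ω => by rw [pow_one, aux_ofreal]
      rw [h5]
      norm_num
    | succ m ih =>
      intro η
      have hrec : F (m + 1 + 2) η = ∫ α in Iic η, F (m + 2) α :=
        hFrec (m + 2) (by omega) η
      rw [hrec]
      have h1 : ∫ α in Iic η, F (m + 2) α
          = ∫ α in Iic η, (1 / (Nat.factorial (m + 1) : ℝ)) *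
              (∫⁻ ω, ENNReal.ofReal (max (α - X ω) 0 ^ (m + 1)) ∂P).toReal := by
        refine setIntegral_congr_fun measurableSet_Iic fun α _ => ?_
        rw [ih α, hconv α m]
      rw [h1, integral_const_mul]
      have h2 : ∫ α in Iic η,
            (∫⁻ ω, ENNReal.ofReal (max (α - X ω) 0 ^ (m + 1)) ∂P).toReal
          = (∫⁻ α in Iic η, ∫⁻ ω, ENNReal.ofReal (max (α - X ω) 0 ^ (m + 1)) ∂P).toReal := by
        refine integral_toReal ((hS m).lintegral_prod_right.aemeasurable.restrict)
          (Filter.Eventually.of_forall fun α => hfin α m)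
      rw [h2, lintegral_lintegral_swap (hS m).aemeasurable]
      have h3 : ∫⁻ ω, (∫⁻ α in Iic η, ENNReal.ofReal (max (α - X ω) 0 ^ (m + 1))) ∂P
          = ∫⁻ ω, ENNReal.ofReal (max (η - X ω) 0 ^ (m + 2) / ((m : ℝ) + 2)) ∂P :=
        lintegral_congr fun ω => aux_lint (X ω) η m
      rw [h3]
      have h4 : ∫ ω, max (η - X ω) 0 ^ (m + 2) / ((m : ℝ) + 2) ∂P
          = (∫⁻ ω, ENNReal.ofReal (max (η - X ω) 0 ^ (m + 2) / ((m : ℝ) + 2)) ∂P).toReal :=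
        integral_eq_lintegral_of_nonneg_ae
          (Filter.Eventually.of_forall fun ω =>
            div_nonneg (pow_nonneg (le_max_right _ _) _) (by positivity))
          ((hmω η (m + 1)).div_const _).aestronglyMeasurable
      rw [← h4, integral_div]
      have hfac : (Nat.factorial (m + 1 + 1) : ℝ)
          = ((m : ℝ) + 2) * (Nat.factorial (m + 1) : ℝ) := by
        rw [Nat.factorial_succ]
        push_cast
        ring
      rw [hfac]
      have h5 : (Nat.factorial (m + 1) : ℝ) ≠ 0 :=
        Nat.cast_ne_zero.mpr (Nat.factorial_ne_zero _)
      have h6 : ((m : ℝ) + 2) ≠ 0 := by positivity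
      field_simp
  obtain ⟨n, rfl⟩ : ∃ n, k = n + 2 := ⟨k - 2, by omega⟩
  exact key n η
end

section
/- Let a ≤ b be real numbers and let X, Y be real random variables with values in [a, b] almost surely. Then E[(η − X)₊] ≤ E[(η − Y)₊] for every η ∈ ℝ if and only if E[u(X)] ≥ E[u(Y)] for every nondecreasing concave function u : ℝ → ℝ. -/
open MeasureTheory Set


lemma ssd_abel (t : ℕ → ℝ) (m : ℕ) :
    ∑ k ∈ Finset.range m, (t k - t (k+1)) * ((k:ℝ)+1) =
      (∑ k ∈ Finset.range m, t k) - m * t m := by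
  induction m with
  | zero => simp
  | succ m ih =>
      rw [Finset.sum_range_succ, Finset.sum_range_succ, ih]
      push_cast; ring

lemma ssd_min_concave (η : ℝ) : ConcaveOn ℝ Set.univ (fun x => min (x - η) 0) := by
  refine ⟨convex_univ, ?_⟩
  intro x _ y _ p q hp hq hpq
  simp only [smul_eq_mul]
  refine le_min ?_ ?_
  · have h1 : p * min (x - η) 0 ≤ p * (x - η) :=
      mul_le_mul_of_nonneg_left (min_le_left _ _) hp
    have h2 : q * min (y - η) 0 ≤ q * (y - η) :=
      mul_le_mul_of_nonneg_left (min_le_left _ _) hq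
    have h3 : p * (x - η) + q * (y - η) = p * x + q * y - η := by
      linear_combination (-η) * hpq
    linarith
  · have h1 : p * min (x - η) 0 ≤ 0 := mul_nonpos_of_nonneg_of_nonpos hp (min_le_right _ _)
    have h2 : q * min (y - η) 0 ≤ 0 := mul_nonpos_of_nonneg_of_nonpos hq (min_le_right _ _)
    linarith

lemma ssd_min_mono (η : ℝ) : Monotone (fun x => min (x - η) 0) := by
  intro x y h
  exact min_le_min (by linarith) le_rfl

lemma ssd_min_eq (η z : ℝ) : min (z - η) 0 = -(max (η - z) 0) := by
  have h := max_neg_neg (z - η) (0:ℝ)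
  rw [neg_zero] at h
  rw [show η - z = -(z - η) by ring, h]; ring


lemma ssd_grid (u : ℝ → ℝ) (a δ : ℝ) (hδ : 0 < δ) (n j : ℕ) (hj : j ≤ n)
    (s : ℕ → ℝ) (hs : s = fun i => if i < n then (u (a+((i:ℝ)+1)*δ) - u (a+(i:ℝ)*δ))/δ else 0) :
    ∑ i ∈ Finset.range n, (s i - s (i+1)) * max (a + ((i:ℝ)+1)*δ - (a + (j:ℝ)*δ)) 0
      = u (a + (n:ℝ)*δ) - u (a + (j:ℝ)*δ) := by
  rw [Finset.range_eq_Ico, ← Finset.sum_Ico_consecutive _ (Nat.zero_le j) hj]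
  have h1 : ∑ i ∈ Finset.Ico 0 j, (s i - s (i+1)) * max (a + ((i:ℝ)+1)*δ - (a + (j:ℝ)*δ)) 0 = 0 := by
    apply Finset.sum_eq_zero
    intro i hi
    have hij : i < j := (Finset.mem_Ico.mp hi).2
    have h : a + ((i:ℝ)+1)*δ - (a + (j:ℝ)*δ) ≤ 0 := by
      have : ((i:ℝ)+1) ≤ (j:ℝ) := by exact_mod_cast hij
      nlinarith
    rw [max_eq_right h, mul_zero]
  rw [h1, zero_add, Finset.sum_Ico_eq_sum_range]
  set t : ℕ → ℝ := fun k => s (j+k) with ht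
  have h2 : ∀ k ∈ Finset.range (n - j),
      (s (j+k) - s (j+k+1)) * max (a + (((j+k:ℕ):ℝ)+1)*δ - (a + (j:ℝ)*δ)) 0
      = δ * ((t k - t (k+1)) * ((k:ℝ)+1)) := by
    intro k _
    have hmax : max (a + (((j+k:ℕ):ℝ)+1)*δ - (a + (j:ℝ)*δ)) 0 = ((k:ℝ)+1)*δ := by
      rw [max_eq_left]
      · push_cast; ring
      · push_cast
        nlinarith [Nat.cast_nonneg (α := ℝ) k]
    rw [hmax, ht]
    simp only []
    rw [show j + k + 1 = j + (k+1) by ring]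
    ring
  rw [Finset.sum_congr rfl h2, ← Finset.mul_sum, ssd_abel t (n - j)]
  have htn : t (n - j) = 0 := by
    rw [ht]; simp only [Nat.add_sub_cancel' hj, hs]
    simp
  rw [htn]
  have h3 : ∑ k ∈ Finset.range (n - j), t k
      = ∑ k ∈ Finset.range (n - j), ((fun k : ℕ => u (a + ((j:ℝ)+(k:ℝ))*δ)) (k+1) - (fun k : ℕ => u (a + ((j:ℝ)+(k:ℝ))*δ)) k) / δ := by
    apply Finset.sum_congr rfl
    intro k hk
    have hkn : j + k < n := by
      have := Finset.mem_range.mp hk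
      omega
    rw [ht, hs]
    simp only [hkn, if_pos, Nat.cast_add]
    push_cast
    ring_nf
  rw [h3]
  rw [← Finset.sum_div, Finset.sum_range_sub (fun k : ℕ => u (a + ((j:ℝ)+(k:ℝ))*δ))]
  have : ((j:ℝ) + ((n - j : ℕ):ℝ)) = (n:ℝ) := by
    have : ((n - j : ℕ):ℝ) = (n:ℝ) - (j:ℝ) := by
      push_cast [Nat.cast_sub hj]; ring
    rw [this]; ring
  rw [this]
  field_simp
  simp

lemma ssd_midpoint {u : ℝ → ℝ} (hconc : ConcaveOn ℝ Set.univ u) (x δ : ℝ) :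
    u x + u (x + 2*δ) ≤ 2 * u (x + δ) := by
  have h := hconc.2 (Set.mem_univ x) (Set.mem_univ (x + 2*δ))
    (by norm_num : (0:ℝ) ≤ 1/2) (by norm_num : (0:ℝ) ≤ 1/2) (by norm_num)
  simp only [smul_eq_mul] at h
  have hx : (1/2 : ℝ) * x + (1/2 : ℝ) * (x + 2*δ) = x + δ := by ring
  rw [hx] at h
  linarith

lemma ssd_inc_bound {u : ℝ → ℝ} (hconc : ConcaveOn ℝ Set.univ u) (a δ : ℝ) (hδ : 0 < δ) :
    u (a + δ) - u a ≤ δ * (u a - u (a-1)) := by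
  have h1δ : (0:ℝ) < 1 + δ := by linarith
  have h := hconc.2 (Set.mem_univ (a-1)) (Set.mem_univ (a+δ))
    (le_of_lt (div_pos hδ h1δ)) (le_of_lt (div_pos one_pos h1δ))
    (by field_simp; ring)
  simp only [smul_eq_mul] at h
  have hx : δ/(1+δ) * (a-1) + 1/(1+δ) * (a+δ) = a := by field_simp; ring
  rw [hx] at h
  have h2 : δ * u (a-1) + u (a+δ) ≤ (1+δ) * u a := by
    have := mul_le_mul_of_nonneg_left h (le_of_lt h1δ)
    field_simp at this
    linarith
  linarith

lemma ssd_d_le (u : ℝ → ℝ) (hconc : ConcaveOn ℝ Set.univ u) (a δ : ℝ) (hδ : 0 < δ) (j : ℕ) :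
    u (a + ((j:ℝ)+1)*δ) - u (a + (j:ℝ)*δ) ≤ δ * (u a - u (a-1)) := by
  have hanti : Antitone (fun j : ℕ => u (a + ((j:ℝ)+1)*δ) - u (a + (j:ℝ)*δ)) := by
    apply antitone_nat_of_succ_le
    intro m
    have h := ssd_midpoint hconc (a + (m:ℝ)*δ) δ
    push_cast
    have e1 : a + (m:ℝ)*δ + 2*δ = a + ((m:ℝ)+1+1)*δ := by ring
    have e2 : a + (m:ℝ)*δ + δ = a + ((m:ℝ)+1)*δ := by ring
    rw [e1, e2] at h
    linarith
  have h0 := hanti (Nat.zero_le j)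
  simp only [Nat.cast_zero] at h0
  have := ssd_inc_bound hconc a δ hδ
  calc u (a + ((j:ℝ)+1)*δ) - u (a + (j:ℝ)*δ) ≤ u (a + (0+1)*δ) - u (a + 0*δ) := h0
    _ = u (a + δ) - u a := by norm_num
    _ ≤ δ * (u a - u (a-1)) := this

lemma ssd_s_nonneg (u : ℝ → ℝ) (hmono : Monotone u) (a δ : ℝ) (hδ : 0 < δ) (n i : ℕ)
    (s : ℕ → ℝ) (hs : s = fun i => if i < n then (u (a+((i:ℝ)+1)*δ) - u (a+(i:ℝ)*δ))/δ else 0) :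
    0 ≤ s i := by
  rw [hs]
  dsimp only
  split_ifs
  · apply div_nonneg _ (le_of_lt hδ)
    have : a + (i:ℝ)*δ ≤ a + ((i:ℝ)+1)*δ := by nlinarith
    linarith [hmono this]
  · exact le_refl 0

lemma ssd_s_step (u : ℝ → ℝ) (hmono : Monotone u) (hconc : ConcaveOn ℝ Set.univ u)
    (a δ : ℝ) (hδ : 0 < δ) (n i : ℕ)
    (s : ℕ → ℝ) (hs : s = fun i => if i < n then (u (a+((i:ℝ)+1)*δ) - u (a+(i:ℝ)*δ))/δ else 0) :
    s (i+1) ≤ s i := by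
  by_cases h1 : i + 1 < n
  · have h0 : i < n := by omega
    rw [hs]
    dsimp only
    rw [if_pos h1, if_pos h0]
    rw [div_le_div_iff_of_pos_right hδ]
    have h := ssd_midpoint hconc (a + (i:ℝ)*δ) δ
    have e1 : a + (i:ℝ)*δ + 2*δ = a + ((i:ℝ)+1+1)*δ := by ring
    have e2 : a + (i:ℝ)*δ + δ = a + ((i:ℝ)+1)*δ := by ring
    rw [e1, e2] at h
    push_cast
    linarith
  · have := ssd_s_nonneg u hmono a δ hδ n i s hs
    have h2 : s (i+1) = 0 := by rw [hs]; simp [h1]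
    rw [h2]; exact this

lemma ssd_g_mono (u : ℝ → ℝ) (hmono : Monotone u) (hconc : ConcaveOn ℝ Set.univ u)
    (a δ : ℝ) (hδ : 0 < δ) (n : ℕ)
    (s : ℕ → ℝ) (hs : s = fun i => if i < n then (u (a+((i:ℝ)+1)*δ) - u (a+(i:ℝ)*δ))/δ else 0)
    (g : ℝ → ℝ)
    (hg : g = fun x => u (a + (n:ℝ)*δ)
      - ∑ i ∈ Finset.range n, (s i - s (i+1)) * max (a + ((i:ℝ)+1)*δ - x) 0) :
    Monotone g := by
  intro x1 x2 h12
  rw [hg]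
  dsimp only
  have : ∑ i ∈ Finset.range n, (s i - s (i+1)) * max (a + ((i:ℝ)+1)*δ - x2) 0
      ≤ ∑ i ∈ Finset.range n, (s i - s (i+1)) * max (a + ((i:ℝ)+1)*δ - x1) 0 := by
    apply Finset.sum_le_sum
    intro i _
    have hlam : 0 ≤ s i - s (i+1) := by
      have := ssd_s_step u hmono hconc a δ hδ n i s hs
      linarith
    apply mul_le_mul_of_nonneg_left _ hlam
    exact max_le_max (by linarith) le_rfl
  linarith

lemma ssd_approx (u : ℝ → ℝ) (hmono : Monotone u) (hconc : ConcaveOn ℝ Set.univ u)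
    (a δ : ℝ) (hδ : 0 < δ) (n : ℕ)
    (s : ℕ → ℝ) (hs : s = fun i => if i < n then (u (a+((i:ℝ)+1)*δ) - u (a+(i:ℝ)*δ))/δ else 0)
    (g : ℝ → ℝ)
    (hg : g = fun x => u (a + (n:ℝ)*δ)
      - ∑ i ∈ Finset.range n, (s i - s (i+1)) * max (a + ((i:ℝ)+1)*δ - x) 0)
    (x : ℝ) (hx : x ∈ Set.Icc a (a + (n:ℝ)*δ)) :
    |u x - g x| ≤ δ * (u a - u (a-1)) := by
  obtain ⟨hxa, hxb⟩ := hx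
  have hC : 0 ≤ u a - u (a-1) := by
    have := hmono (show a - 1 ≤ a by linarith)
    linarith
  have hbound : 0 ≤ δ * (u a - u (a-1)) := mul_nonneg (le_of_lt hδ) hC
  have hgrid : ∀ j : ℕ, j ≤ n → g (a + (j:ℝ)*δ) = u (a + (j:ℝ)*δ) := by
    intro j hj
    rw [hg]
    dsimp only
    rw [ssd_grid u a δ hδ n j hj s hs]
    ring
  have hgmono : Monotone g := ssd_g_mono u hmono hconc a δ hδ n s hs g hg
  set k := Nat.floor ((x - a)/δ) with hk
  have hfl : (k:ℝ) ≤ (x - a)/δ := Nat.floor_le (div_nonneg (by linarith) hδ.le)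
  have hfu : (x - a)/δ < (k:ℝ) + 1 := Nat.lt_floor_add_one _
  by_cases hkn : k < n
  · have hk1 : a + (k:ℝ)*δ ≤ x := by
      have : (k:ℝ)*δ ≤ x - a := (le_div_iff₀ hδ).mp hfl
      linarith
    have hk2 : x ≤ a + ((k:ℝ)+1)*δ := by
      have : x - a < ((k:ℝ)+1)*δ := by
        rw [div_lt_iff₀ hδ] at hfu
        linarith
      linarith
    have g1 : g (a + (k:ℝ)*δ) = u (a + (k:ℝ)*δ) := hgrid k (le_of_lt hkn)
    have g2 : g (a + ((k:ℝ)+1)*δ) = u (a + ((k:ℝ)+1)*δ) := by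
      have := hgrid (k+1) hkn
      push_cast at this
      exact this
    have hu1 : u (a + (k:ℝ)*δ) ≤ u x := hmono hk1
    have hu2 : u x ≤ u (a + ((k:ℝ)+1)*δ) := hmono hk2
    have hg1 : g (a + (k:ℝ)*δ) ≤ g x := hgmono hk1
    have hg2 : g x ≤ g (a + ((k:ℝ)+1)*δ) := hgmono hk2
    have hd := ssd_d_le u hconc a δ hδ k
    rw [abs_le]
    constructor <;> linarith
  · have hxe : x = a + (n:ℝ)*δ := by
      have hn : (n:ℝ) ≤ (k:ℝ) := by exact_mod_cast Nat.le_of_not_lt hkn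
      have : (n:ℝ)*δ ≤ x - a := by
        have : (n:ℝ) ≤ (x-a)/δ := le_trans hn hfl
        rw [le_div_iff₀ hδ] at this
        linarith
      linarith
    rw [hxe, hgrid n le_rfl]
    simpa using hbound

lemma ssd_int {Ω : Type*} [MeasurableSpace Ω] (μ : Measure Ω) [IsFiniteMeasure μ]
    (Z : Ω → ℝ) (hZ : Measurable Z) (a b : ℝ)
    (hZab : ∀ᵐ ω ∂μ, Z ω ∈ Set.Icc a b) (f : ℝ → ℝ) (hf : Monotone f) :
    Integrable (fun ω => f (Z ω)) μ := by
  apply Integrable.mono' (integrable_const (max |f a| |f b|))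
    ((hf.measurable.comp hZ).aestronglyMeasurable)
  filter_upwards [hZab] with ω hω
  exact abs_le_max_abs_abs (hf hω.1) (hf hω.2)

lemma ssd_int_max {Ω : Type*} [MeasurableSpace Ω] (μ : Measure Ω) [IsFiniteMeasure μ]
    (Z : Ω → ℝ) (hZ : Measurable Z) (a : ℝ) (hZa : ∀ᵐ ω ∂μ, a ≤ Z ω) (p : ℝ) :
    Integrable (fun ω => max (p - Z ω) 0) μ := by
  apply Integrable.mono' (integrable_const (max (p - a) 0))
    (((measurable_const.sub hZ).max measurable_const).aestronglyMeasurable)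
  filter_upwards [hZa] with ω hω
  rw [Real.norm_eq_abs, abs_of_nonneg (le_max_right _ _)]
  exact max_le_max (by show p - Z ω ≤ p - a; linarith) le_rfl

lemma ssd_integral_g {Ω : Type*} [MeasurableSpace Ω] (μ : Measure Ω) [IsProbabilityMeasure μ]
    (Z : Ω → ℝ) (hZ : Measurable Z) (a : ℝ) (ha : ∀ᵐ ω ∂μ, a ≤ Z ω)
    (c δ : ℝ) (n : ℕ) (lam : ℕ → ℝ) (g : ℝ → ℝ)
    (hg : g = fun x => c - ∑ i ∈ Finset.range n, lam i * max (a + ((i:ℝ)+1)*δ - x) 0) :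
    ∫ ω, g (Z ω) ∂μ
      = c - ∑ i ∈ Finset.range n, lam i * ∫ ω, max (a + ((i:ℝ)+1)*δ - Z ω) 0 ∂μ := by
  have hint : ∀ i : ℕ, Integrable (fun ω => max (a + ((i:ℝ)+1)*δ - Z ω) 0) μ :=
    fun i => ssd_int_max μ Z hZ a ha _
  simp only [hg]
  rw [integral_sub (integrable_const c)
    (integrable_finset_sum _ (fun i _ => (hint i).const_mul (lam i)))]
  rw [integral_const, probReal_univ, one_smul]
  rw [integral_finset_sum _ (fun i _ => (hint i).const_mul (lam i))]
  congr 1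
  exact Finset.sum_congr rfl (fun i _ => integral_const_mul (lam i) _)

/-- Utility-function characterization of second-order stochastic dominance:
`E[(η - X)₊] ≤ E[(η - Y)₊]` for every `η` iff `E[u(X)] ≥ E[u(Y)]` for every
nondecreasing concave `u : ℝ → ℝ`. -/
theorem stmt11 {Ω₁ Ω₂ : Type*} [MeasurableSpace Ω₁] [MeasurableSpace Ω₂]
    (P : Measure Ω₁) (Q : Measure Ω₂) [IsProbabilityMeasure P] [IsProbabilityMeasure Q]
    (a b : ℝ) (hab : a ≤ b)
    (X : Ω₁ → ℝ) (Y : Ω₂ → ℝ) (hX : Measurable X) (hY : Measurable Y)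
    (hXab : ∀ᵐ ω ∂P, X ω ∈ Set.Icc a b) (hYab : ∀ᵐ ω ∂Q, Y ω ∈ Set.Icc a b) :
    (∀ η : ℝ, (∫ ω, max (η - X ω) 0 ∂P) ≤ ∫ ω, max (η - Y ω) 0 ∂Q) ↔
    (∀ u : ℝ → ℝ, Monotone u → ConcaveOn ℝ Set.univ u →
      (∫ ω, u (Y ω) ∂Q) ≤ ∫ ω, u (X ω) ∂P) := by
  constructor
  · intro h u humono huconc
    rcases eq_or_lt_of_le hab with heq | hlt
    · -- degenerate case a = b
      have hXa : (fun ω => u (X ω)) =ᵐ[P] fun _ => u a := by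
        filter_upwards [hXab] with ω hω
        rw [le_antisymm (heq ▸ hω.2) hω.1]
      have hYa : (fun ω => u (Y ω)) =ᵐ[Q] fun _ => u a := by
        filter_upwards [hYab] with ω hω
        rw [le_antisymm (heq ▸ hω.2) hω.1]
      rw [integral_congr_ae hXa, integral_congr_ae hYa]
      simp
    · apply le_of_forall_pos_le_add
      intro ε hε
      have hε2 : (0:ℝ) < ε/2 := by linarith
      set C := u a - u (a-1) with hCdef
      have hC : 0 ≤ C := by
        have := humono (show a - 1 ≤ a by linarith)
        rw [hCdef]; linarith
      obtain ⟨n, hn⟩ := exists_nat_gt (max 1 ((b-a)*C/(ε/2)))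
      have hn1 : (1:ℝ) ≤ n := le_of_lt (lt_of_le_of_lt (le_max_left _ _) hn)
      have hnpos : (0:ℝ) < n := by linarith
      have hnne : (n:ℝ) ≠ 0 := ne_of_gt hnpos
      set δ := (b-a)/(n:ℝ) with hδdef
      have hδ : 0 < δ := div_pos (by linarith) hnpos
      have hb : b = a + (n:ℝ)*δ := by
        rw [hδdef]; field_simp; ring
      have hδC : δ * C ≤ ε/2 := by
        have h2 : (b-a)*C/(ε/2) < n := lt_of_le_of_lt (le_max_right _ _) hn
        rw [div_lt_iff₀ hε2] at h2
        rw [hδdef, div_mul_eq_mul_div, div_le_iff₀ hnpos]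
        nlinarith
      set s : ℕ → ℝ := fun i => if i < n then (u (a+((i:ℝ)+1)*δ) - u (a+(i:ℝ)*δ))/δ else 0
        with hs
      set g : ℝ → ℝ := fun x => u (a + (n:ℝ)*δ)
        - ∑ i ∈ Finset.range n, (s i - s (i+1)) * max (a + ((i:ℝ)+1)*δ - x) 0 with hg
      have hgmono : Monotone g := ssd_g_mono u humono huconc a δ hδ n s hs g hg
      have happrox : ∀ x ∈ Set.Icc a b, |u x - g x| ≤ ε/2 := by
        intro x hx
        refine le_trans (ssd_approx u humono huconc a δ hδ n s hs g hg x ?_) hδC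
        rwa [← hb]
      have haY : ∀ᵐ ω ∂Q, a ≤ Y ω := by filter_upwards [hYab] with ω hω using hω.1
      have haX : ∀ᵐ ω ∂P, a ≤ X ω := by filter_upwards [hXab] with ω hω using hω.1
      have huY := ssd_int Q Y hY a b hYab u humono
      have hgY := ssd_int Q Y hY a b hYab g hgmono
      have huX := ssd_int P X hX a b hXab u humono
      have hgX := ssd_int P X hX a b hXab g hgmono
      have step1 : ∫ ω, u (Y ω) ∂Q ≤ (∫ ω, g (Y ω) ∂Q) + ε/2 := by
        have hmono2 := integral_mono_ae huY (hgY.add (integrable_const (ε/2))) ?_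
        · simp only [Pi.add_apply] at hmono2
          rwa [integral_add hgY (integrable_const _), integral_const, probReal_univ,
            one_smul] at hmono2
        · filter_upwards [hYab] with ω hω
          have := abs_le.mp (happrox _ hω)
          simp only [Pi.add_apply]
          linarith [this.1]
      have step3 : ∫ ω, g (X ω) ∂P ≤ (∫ ω, u (X ω) ∂P) + ε/2 := by
        have hmono2 := integral_mono_ae hgX (huX.add (integrable_const (ε/2))) ?_
        · simp only [Pi.add_apply] at hmono2
          rwa [integral_add huX (integrable_const _), integral_const, probReal_univ,
            one_smul] at hmono2
        · filter_upwards [hXab] with ω hω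
          have := abs_le.mp (happrox _ hω)
          simp only [Pi.add_apply]
          linarith [this.2]
      have step2 : ∫ ω, g (Y ω) ∂Q ≤ ∫ ω, g (X ω) ∂P := by
        rw [ssd_integral_g Q Y hY a haY _ δ n (fun i => s i - s (i+1)) g hg,
            ssd_integral_g P X hX a haX _ δ n (fun i => s i - s (i+1)) g hg]
        have hsum : ∑ i ∈ Finset.range n,
            (s i - s (i+1)) * ∫ ω, max (a + ((i:ℝ)+1)*δ - X ω) 0 ∂P
            ≤ ∑ i ∈ Finset.range n,
            (s i - s (i+1)) * ∫ ω, max (a + ((i:ℝ)+1)*δ - Y ω) 0 ∂Q := by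
          apply Finset.sum_le_sum
          intro i _
          have hlam : 0 ≤ s i - s (i+1) := by
            have := ssd_s_step u humono huconc a δ hδ n i s hs
            linarith
          exact mul_le_mul_of_nonneg_left (h _) hlam
        linarith
      linarith
  · intro h η
    have hu := h (fun x => min (x - η) 0) (ssd_min_mono η) (ssd_min_concave η)
    simp only [ssd_min_eq η] at hu
    rw [integral_neg, integral_neg] at hu
    linarith
end
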